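/- Let G be a finite nilpotent group having a subgroup N such that (G,N) is an equal order pair. Then there exists a prime p such that G is a p-group (the order of G is a power of p). -/
import Mathlib


/-- `(G, N)` is an *equal order pair* if `N` is a proper, nontrivial, normal subgroup of `G`
and for every `x ∈ G \ N` and every `n ∈ N`, the order of `x * n` equals the order of `x`. -/
def IsEqualOrderPair {G : Type*} [Group G] (N : Subgroup G) : Prop :=
  N.Normal ∧ N ≠ ⊥ ∧ N ≠ ⊤ ∧ ∀ x ∉ N, ∀ n ∈ N, orderOf (x * n) = orderOf x

section Aux

variable {G : Type*} [Group G] [Finite G]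

lemma pgroup_zpowers_of_orderOf {s k : ℕ} (hs : s.Prime) {y : G} (hk : orderOf y = s ^ k) :
    IsPGroup s (Subgroup.zpowers y) := by
  haveI := Fact.mk hs
  exact IsPGroup.iff_card.mpr ⟨k, by rw [Nat.card_zpowers, hk]⟩

/-- In a finite nilpotent group, elements of coprime prime-power orders commute. -/
lemma aux_commute [Group.IsNilpotent G] {p q : ℕ} (hp : p.Prime) (hq : q.Prime) (hpq : p ≠ q)
    {x y : G} (hx : IsPGroup p (Subgroup.zpowers x)) (hy : IsPGroup q (Subgroup.zpowers y)) :
    Commute x y := by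
  haveI := Fact.mk hp
  haveI := Fact.mk hq
  obtain ⟨P, hxP⟩ := hx.exists_le_sylow
  obtain ⟨Q, hyQ⟩ := hy.exists_le_sylow
  have hnorm := (isNilpotent_of_finite_tfae (G := G)).out 0 3
  have hPn : (P : Subgroup G).Normal := hnorm.mp ‹_› p ‹_› P
  have hQn : (Q : Subgroup G).Normal := hnorm.mp ‹_› q ‹_› Q
  have hdis : Disjoint (P : Subgroup G) (Q : Subgroup G) :=
    IsPGroup.disjoint_of_ne p q hpq _ _ P.isPGroup' Q.isPGroup'
  exact Subgroup.commute_of_normal_of_disjoint _ _ hPn hQn hdis x y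
    (hxP (Subgroup.mem_zpowers x)) (hyQ (Subgroup.mem_zpowers y))

/-- Outside a proper subgroup one can find an element of prime-power order. -/
lemma exists_primepow_not_mem (N : Subgroup G) :
    ∀ d (x : G), orderOf x = d → x ∉ N →
      ∃ y, y ∉ N ∧ ∃ s k : ℕ, s.Prime ∧ 0 < k ∧ orderOf y = s ^ k := by
  intro d
  induction d using Nat.strong_induction_on with
  | _ d ih =>
    intro x hd hx
    have hx1 : x ≠ 1 := fun h => hx (h ▸ N.one_mem)
    have hd0 : d ≠ 0 := by
      rw [← hd]; exact (orderOf_pos x).ne'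
    have hd1 : d ≠ 1 := by
      rw [← hd]; simpa [orderOf_eq_one_iff] using hx1
    by_cases hpp : IsPrimePow d
    · obtain ⟨s, k, hs, hk, hsk⟩ := hpp
      exact ⟨x, hx, s, k, Nat.prime_iff.mpr hs, hk, by rw [hd, ← hsk]⟩
    · obtain ⟨a, b, hdab, hcop, ha1, hb1⟩ :
          ∃ a b, d = a * b ∧ Nat.Coprime a b ∧ 1 < a ∧ 1 < b := by
      -- split off the minFac part
        have hp : d.minFac.Prime := Nat.minFac_prime hd1
        have hfac : d.factorization d.minFac ≠ 0 :=
          (hp.factorization_pos_of_dvd hd0 (Nat.minFac_dvd d)).ne'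
        refine ⟨d.minFac ^ d.factorization d.minFac,
          d / d.minFac ^ d.factorization d.minFac,
          (Nat.mul_div_cancel' (Nat.ordProj_dvd d _)).symm,
          (Nat.coprime_ordCompl hp hd0).pow_left _,
          Nat.one_lt_pow hfac hp.one_lt, ?_⟩
        have hb0 : 0 < d / d.minFac ^ d.factorization d.minFac := Nat.ordCompl_pos _ hd0
        rcases Nat.lt_or_ge (d / d.minFac ^ d.factorization d.minFac) 2 with hlt | hge
        · exfalso
          have hbone : d / d.minFac ^ d.factorization d.minFac = 1 := by omega
          have h2 := Nat.ordProj_mul_ordCompl_eq_self d d.minFac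
          rw [hbone, mul_one] at h2
          exact hpp ⟨d.minFac, d.factorization d.minFac, Nat.prime_iff.mp hp,
            Nat.pos_of_ne_zero hfac, h2⟩
        · exact hge
      have ha0 : 0 < a := by omega
      have hb0 : 0 < b := by omega
      have hadvd : a ∣ d := ⟨b, hdab⟩
      have hbdvd : b ∣ d := ⟨a, by rw [hdab, mul_comm]⟩
      have haltd : a < d := by
        rw [hdab]; exact lt_mul_of_one_lt_right ha0 hb1
      have hbltd : b < d := by
        rw [hdab]; exact lt_mul_of_one_lt_left hb0 ha1
      have hou : orderOf (x ^ b) = a := by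
        rw [orderOf_pow, hd, Nat.gcd_eq_right hbdvd, hdab, Nat.mul_div_cancel _ hb0]
      have hov : orderOf (x ^ a) = b := by
        rw [orderOf_pow, hd, Nat.gcd_eq_right hadvd, hdab, Nat.mul_div_cancel_left _ ha0]
      have hkey : x ^ b ∉ N ∨ x ^ a ∉ N := by
        by_contra hcontra
        push_neg at hcontra
        apply hx
        have hbez : (1 : ℤ) = a * Nat.gcdA a b + b * Nat.gcdB a b := by
          have := Nat.gcd_eq_gcd_ab a b
          rwa [hcop.gcd_eq_one] at this
        have : x = (x ^ a) ^ Nat.gcdA a b * (x ^ b) ^ Nat.gcdB a b := by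
          rw [← zpow_natCast x a, ← zpow_natCast x b, ← zpow_mul, ← zpow_mul, ← zpow_add,
            ← hbez, zpow_one]
        rw [this]
        exact N.mul_mem (N.zpow_mem hcontra.2 _) (N.zpow_mem hcontra.1 _)
      rcases hkey with hu | hv
      · exact ih a haltd _ hou hu
      · exact ih b hbltd _ hov hv

lemma order_clash [Group.IsNilpotent G] (N : Subgroup G)
    (heq : ∀ x ∉ N, ∀ n ∈ N, orderOf (x * n) = orderOf x)
    {y m : G} (hy : y ∉ N) (hm : m ∈ N)
    {s k r l : ℕ} (hs : s.Prime) (hr : r.Prime) (hsr : s ≠ r)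
    (hk : orderOf y = s ^ k) (hl : orderOf m = r ^ l) (hl0 : 0 < l) : False := by
  have hc : Commute y m :=
    aux_commute hs hr hsr (pgroup_zpowers_of_orderOf hs hk) (pgroup_zpowers_of_orderOf hr hl)
  have hcop : Nat.Coprime (orderOf y) (orderOf m) := by
    rw [hk, hl]
    exact ((Nat.coprime_primes hs hr).mpr hsr).pow _ _
  have h1 := hc.orderOf_mul_eq_mul_orderOf_of_coprime hcop
  rw [heq y hy m hm] at h1
  have hs0 : 0 < orderOf y := orderOf_pos y
  have : orderOf m = 1 := by
    nlinarith [orderOf_pos m]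
  rw [hl] at this
  exact absurd this (Nat.one_lt_pow hl0.ne' hr.one_lt).ne'

end Aux

theorem stmt8 {G : Type*} [Group G] [Finite G] [Group.IsNilpotent G]
    (N : Subgroup G) (h : IsEqualOrderPair N) :
    ∃ p : ℕ, p.Prime ∧ ∃ n : ℕ, Nat.card G = p ^ n := by
  obtain ⟨hN, hbot, htop, heq⟩ := h
  by_contra hcon
  push_neg at hcon
  -- `Nat.card G` has at least two distinct prime divisors
  set c := Nat.card G with hc_def
  have hc0 : c ≠ 0 := Nat.card_pos.ne'
  have hc1 : c ≠ 1 := by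
    intro h1
    exact absurd (h1.trans (pow_zero 2).symm) (hcon 2 Nat.prime_two 0)
  have hp : (c.minFac).Prime := Nat.minFac_prime hc1
  set p := c.minFac with hp_def
  have hpdvd : p ∣ c := Nat.minFac_dvd c
  have hcompl1 : c / p ^ c.factorization p ≠ 1 := by
    intro h1
    have h2 := Nat.ordProj_mul_ordCompl_eq_self c p
    rw [h1, mul_one] at h2
    exact absurd h2.symm (hcon p hp _)
  have hq : ((c / p ^ c.factorization p).minFac).Prime := Nat.minFac_prime hcompl1
  set q := (c / p ^ c.factorization p).minFac with hq_def
  have hqdvd : q ∣ c := (Nat.minFac_dvd _).trans (Nat.ordCompl_dvd c p)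
  have hpq : p ≠ q := by
    intro hpq
    have : q ∣ c / p ^ c.factorization p := Nat.minFac_dvd _
    rw [← hpq] at this
    exact Nat.not_dvd_ordCompl hp hc0 this
  -- an element of prime order in `N`
  obtain ⟨⟨n₀, hn₀N⟩, hn₀⟩ := Subgroup.ne_bot_iff_exists_ne_one.mp hbot
  have hn₀1 : n₀ ≠ 1 := by simpa [Subtype.ext_iff] using hn₀
  have hon : orderOf n₀ ≠ 1 := by simpa [orderOf_eq_one_iff] using hn₀1
  have hon0 : orderOf n₀ ≠ 0 := (orderOf_pos n₀).ne'
  set r := (orderOf n₀).minFac with hr_def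
  have hr : r.Prime := Nat.minFac_prime hon
  have hrdvd : r ∣ orderOf n₀ := Nat.minFac_dvd _
  set m := n₀ ^ (orderOf n₀ / r) with hm_def
  have hmN : m ∈ N := N.pow_mem hn₀N _
  have hom : orderOf m = r := by
    rw [hm_def, orderOf_pow, Nat.gcd_eq_right (Nat.div_dvd_of_dvd hrdvd),
      Nat.div_div_self hrdvd hon0]
  -- an element of prime power order outside `N`
  obtain ⟨x₀, hx₀⟩ : ∃ x, x ∉ N := by
    by_contra hcontra
    push_neg at hcontra
    exact htop ((Subgroup.eq_top_iff' N).mpr hcontra)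
  obtain ⟨y, hy, s, k, hs, hk, hsk⟩ := exists_primepow_not_mem N (orderOf x₀) x₀ rfl hx₀
  by_cases hsr : s = r
  · -- pick a prime `t ≠ r` dividing `c`, and an element `g` of order `t`
    have : ∃ t, t.Prime ∧ t ∣ c ∧ t ≠ r := by
      rcases eq_or_ne p r with hpr | hpr
      · exact ⟨q, hq, hqdvd, fun h => hpq (hpr.trans h.symm)⟩
      · exact ⟨p, hp, hpdvd, hpr⟩
    obtain ⟨t, ht, htdvd, htr⟩ := this
    haveI := Fact.mk ht
    obtain ⟨g, hg⟩ := exists_prime_orderOf_dvd_card' (G := G) t htdvd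
    by_cases hgN : g ∈ N
    · exact order_clash N heq hy hgN hs ht (by omega)
        hsk (hg.trans (pow_one t).symm) one_pos
    · exact order_clash N heq hgN hmN ht hr htr (hg.trans (pow_one t).symm)
        (hom.trans (pow_one r).symm) one_pos
  · exact order_clash N heq hy hmN hs hr hsr hsk (hom.trans (pow_one r).symm) one_pos
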